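/- Fix σ ∈ ℂ and M0 ∈ ℂ, and data matrices H_n(U), H_n(Y) as above. Then the inclusion Σ_{U,Y} ⊆ Σ^0_{σ,M0} holds if and only if there exists ξ ∈ ℂ^{T−n+1} such that H_n(U) ξ = γ_n(σ) and H_n(Y) ξ = M0 γ_n(σ), where γ_n(σ) = (1, σ, σ², …, σ^n)ᵀ ∈ ℂ^{n+1}. -/

import Mathlib

open Matrix

/-- Hankel matrix of depth `n` built from data `W = (w_0, …, w_T)`. -/
def hankel (n T : ℕ) (h : n ≤ T) (W : Fin (T + 1) → ℝ) :
    Matrix (Fin (n + 1)) (Fin (T - n + 1)) ℝ :=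
  Matrix.of fun i j => W ⟨i.1 + j.1, by omega⟩

/-- The order-`n` system with parameters `[q  -p]` explains the data `(U, Y)`. -/
def Explains (n T : ℕ) (h : n ≤ T) (U Y : Fin (T + 1) → ℝ)
    (q : Fin (n + 1) → ℝ) (p : Fin n → ℝ) : Prop :=
  ∀ j : Fin (T - n + 1),
    ∑ i : Fin (n + 1), q i * U ⟨i.1 + j.1, by omega⟩
      - ∑ i : Fin n, p i * Y ⟨i.1 + j.1, by omega⟩ = Y ⟨n + j.1, by omega⟩


lemma dual_solvable {ι κ : Type*} [Fintype ι] [Fintype κ] [DecidableEq ι] [DecidableEq κ]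
    (C : Matrix ι κ ℝ) (d : ι → ℝ)
    (h : ∀ w : ι → ℝ, w ᵥ* C = 0 → w ⬝ᵥ d = 0) : ∃ ξ, C *ᵥ ξ = d := by
  let e := (WithLp.linearEquiv 2 ℝ (ι → ℝ)).symm
  let L : (κ → ℝ) →ₗ[ℝ] EuclideanSpace ℝ ι := e.toLinearMap ∘ₗ C.mulVecLin
  let W : Submodule ℝ (EuclideanSpace ℝ ι) := LinearMap.range L
  have hdd : e d ∈ Wᗮᗮ := by
    rw [Submodule.mem_orthogonal]
    intro w hw
    have hker : w ᵥ* C = 0 := by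
      funext j
      have := hw (L (Pi.single j 1)) ⟨_, rfl⟩
      simpa [L, e, PiLp.inner_apply, RCLike.inner_apply, Matrix.mulVec_single,
        Matrix.vecMul, dotProduct, mul_comm] using this
    have := h w hker
    simpa [e, PiLp.inner_apply, RCLike.inner_apply, dotProduct, mul_comm] using this
  rw [Submodule.orthogonal_orthogonal] at hdd
  obtain ⟨ξ, hξ⟩ := hdd
  exact ⟨ξ, by simpa [L, e] using congrArg (WithLp.linearEquiv 2 ℝ (ι → ℝ)) hξ⟩

lemma pair_solvable {m k : ℕ} (A B : Matrix (Fin m) (Fin k) ℝ) (a b : Fin m → ℝ)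
    (h : ∀ wu wy : Fin m → ℝ,
      (∀ j, ∑ i, wu i * A i j + ∑ i, wy i * B i j = 0) →
      ∑ i, wu i * a i + ∑ i, wy i * b i = 0) :
    ∃ ξ, A *ᵥ ξ = a ∧ B *ᵥ ξ = b := by
  obtain ⟨ξ, hξ⟩ := dual_solvable (Matrix.fromRows A B) (Sum.elim a b) (by
    intro w hw
    have := h (w ∘ Sum.inl) (w ∘ Sum.inr) (by
      intro j
      have := congrFun hw j
      simpa [Matrix.vecMul, dotProduct, Fintype.sum_sum_type] using this)
    simpa [dotProduct, Fintype.sum_sum_type] using this)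
  rw [Matrix.fromRows_mulVec] at hξ
  exact ⟨ξ, by
    constructor <;> funext i
    · exact congrFun hξ (Sum.inl i)
    · exact congrFun hξ (Sum.inr i)⟩

lemma cpair_solvable {m k : ℕ} (A B : Matrix (Fin m) (Fin k) ℝ) (a b : Fin m → ℂ)
    (h : ∀ wu wy : Fin m → ℝ,
      (∀ j, ∑ i, wu i * A i j + ∑ i, wy i * B i j = 0) →
      ∑ i, (wu i : ℂ) * a i + ∑ i, (wy i : ℂ) * b i = 0) :
    ∃ ξ : Fin k → ℂ, (A.map (Complex.ofReal : ℝ → ℂ)) *ᵥ ξ = a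
      ∧ (B.map (Complex.ofReal : ℝ → ℂ)) *ᵥ ξ = b := by
  obtain ⟨ξR, hRA, hRB⟩ := pair_solvable A B (fun i => (a i).re) (fun i => (b i).re) (by
    intro wu wy hker
    have := h wu wy hker
    have := congrArg Complex.re this
    simpa [Complex.add_re, Complex.mul_re] using this)
  obtain ⟨ξI, hIA, hIB⟩ := pair_solvable A B (fun i => (a i).im) (fun i => (b i).im) (by
    intro wu wy hker
    have := h wu wy hker
    have := congrArg Complex.im this
    simpa [Complex.add_im, Complex.mul_im] using this)
  refine ⟨fun j => (ξR j : ℂ) + (ξI j : ℂ) * Complex.I, ?_, ?_⟩ <;> funext i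
  · have hR := congrFun hRA i
    have hI := congrFun hIA i
    simp only [Matrix.mulVec, dotProduct, Matrix.map_apply] at hR hI ⊢
    calc ∑ j, (A i j : ℂ) * ((ξR j : ℂ) + (ξI j : ℂ) * Complex.I)
        = (↑(∑ j, A i j * ξR j) : ℂ) + (↑(∑ j, A i j * ξI j) : ℂ) * Complex.I := by
          push_cast; rw [Finset.sum_mul, ← Finset.sum_add_distrib]; ring_nf
          exact Finset.sum_congr rfl fun _ _ => by ring
      _ = a i := by rw [hR, hI]; exact Complex.re_add_im (a i)
  · have hR := congrFun hRB i
    have hI := congrFun hIB i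
    simp only [Matrix.mulVec, dotProduct, Matrix.map_apply] at hR hI ⊢
    calc ∑ j, (B i j : ℂ) * ((ξR j : ℂ) + (ξI j : ℂ) * Complex.I)
        = (↑(∑ j, B i j * ξR j) : ℂ) + (↑(∑ j, B i j * ξI j) : ℂ) * Complex.I := by
          push_cast; rw [Finset.sum_mul, ← Finset.sum_add_distrib]; ring_nf
          exact Finset.sum_congr rfl fun _ _ => by ring
      _ = b i := by rw [hR, hI]; exact Complex.re_add_im (b i)

theorem stmt_5 (n T : ℕ) (hT : n ≤ T) (U Y : Fin (T + 1) → ℝ) (σ M0 : ℂ)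
    (hne : ∃ (q : Fin (n + 1) → ℝ) (p : Fin n → ℝ), Explains n T hT U Y q p) :
    (∀ (q : Fin (n + 1) → ℝ) (p : Fin n → ℝ), Explains n T hT U Y q p →
        ∑ i : Fin (n + 1), (q i : ℂ) * σ ^ (i : ℕ)
          = M0 * (σ ^ n + ∑ i : Fin n, (p i : ℂ) * σ ^ (i : ℕ))) ↔
      ∃ ξ : Fin (T - n + 1) → ℂ,
        ((hankel n T hT U).map (Complex.ofReal : ℝ → ℂ)) *ᵥ ξ
            = (fun i : Fin (n + 1) => σ ^ (i : ℕ)) ∧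
        ((hankel n T hT Y).map (Complex.ofReal : ℝ → ℂ)) *ᵥ ξ
            = (fun i : Fin (n + 1) => M0 * σ ^ (i : ℕ)) := by
  obtain ⟨q₀, p₀, h₀⟩ := hne
  constructor
  · -- forward
    intro h
    have E0 := h q₀ p₀ h₀
    apply cpair_solvable
    intro wu wy hker
    set α : ℝ := wy (Fin.last n) with hα
    set q' : Fin (n+1) → ℝ := fun i => q₀ i + (wu i + α * q₀ i) with hq'
    set p' : Fin n → ℝ := fun i => p₀ i - (wy i.castSucc - α * p₀ i) with hp'
    have hexp : Explains n T hT U Y q' p' := by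
      intro j
      have h0j := h₀ j
      have hkj := hker j
      simp only [hankel, Matrix.of_apply] at hkj
      rw [Fin.sum_univ_castSucc (f := fun i : Fin (n+1) => wy i * Y ⟨i.1 + j.1, by omega⟩)]
        at hkj
      simp only [Fin.coe_castSucc, Fin.val_last] at hkj
      have dq : ∑ i : Fin (n+1), q' i * U ⟨i.1 + j.1, by omega⟩
          = ∑ i : Fin (n+1), q₀ i * U ⟨i.1 + j.1, by omega⟩
            + (∑ i : Fin (n+1), wu i * U ⟨i.1 + j.1, by omega⟩
              + α * ∑ i : Fin (n+1), q₀ i * U ⟨i.1 + j.1, by omega⟩) := by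
        rw [Finset.mul_sum, ← Finset.sum_add_distrib, ← Finset.sum_add_distrib]
        exact Finset.sum_congr rfl fun i _ => by simp only [hq']; ring
      have dp : ∑ i : Fin n, p' i * Y ⟨i.1 + j.1, by omega⟩
          = ∑ i : Fin n, p₀ i * Y ⟨i.1 + j.1, by omega⟩
            - (∑ i : Fin n, wy i.castSucc * Y ⟨i.1 + j.1, by omega⟩
              - α * ∑ i : Fin n, p₀ i * Y ⟨i.1 + j.1, by omega⟩) := by
        rw [Finset.mul_sum, ← Finset.sum_sub_distrib, ← Finset.sum_sub_distrib]
        exact Finset.sum_congr rfl fun i _ => by simp only [hp']; ring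
      show _ - _ = _
      rw [dq, dp]
      linear_combination (1 + α) * h0j + hkj
    have E1 := h q' p' hexp
    have dq : ∑ i : Fin (n+1), (q' i : ℂ) * σ ^ (i : ℕ)
        = ∑ i : Fin (n+1), (q₀ i : ℂ) * σ ^ (i : ℕ)
          + (∑ i : Fin (n+1), (wu i : ℂ) * σ ^ (i : ℕ)
            + (α : ℂ) * ∑ i : Fin (n+1), (q₀ i : ℂ) * σ ^ (i : ℕ)) := by
      rw [Finset.mul_sum, ← Finset.sum_add_distrib, ← Finset.sum_add_distrib]
      exact Finset.sum_congr rfl fun i _ => by simp only [hq']; push_cast; ring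
    have dp : ∑ i : Fin n, (p' i : ℂ) * σ ^ (i : ℕ)
        = ∑ i : Fin n, (p₀ i : ℂ) * σ ^ (i : ℕ)
          - (∑ i : Fin n, (wy i.castSucc : ℂ) * σ ^ (i : ℕ)
            - (α : ℂ) * ∑ i : Fin n, (p₀ i : ℂ) * σ ^ (i : ℕ)) := by
      rw [Finset.mul_sum, ← Finset.sum_sub_distrib, ← Finset.sum_sub_distrib]
      exact Finset.sum_congr rfl fun i _ => by simp only [hp']; push_cast; ring
    rw [dq, dp] at E1
    have dy : ∑ i : Fin (n+1), (wy i : ℂ) * (M0 * σ ^ (i : ℕ))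
        = M0 * ∑ i : Fin n, (wy i.castSucc : ℂ) * σ ^ (i : ℕ)
          + (α : ℂ) * (M0 * σ ^ n) := by
      rw [Fin.sum_univ_castSucc (f := fun i : Fin (n+1) => (wy i : ℂ) * (M0 * σ ^ (i : ℕ)))]
      simp only [Fin.coe_castSucc, Fin.val_last]
      rw [Finset.mul_sum]
      congr 1
      exact Finset.sum_congr rfl fun i _ => by ring
    rw [dy]
    linear_combination E1 - (1 + (α : ℂ)) * E0
  · -- backward
    rintro ⟨ξ, hU, hY⟩ q p hqp
    have hUi : ∀ i : Fin (n+1), (σ : ℂ) ^ (i : ℕ)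
        = ∑ j, (U ⟨i.1 + j.1, by omega⟩ : ℂ) * ξ j := by
      intro i
      have := congrFun hU i
      simpa [Matrix.mulVec, dotProduct, hankel] using this.symm
    have hYi : ∀ i : Fin (n+1), M0 * (σ : ℂ) ^ (i : ℕ)
        = ∑ j, (Y ⟨i.1 + j.1, by omega⟩ : ℂ) * ξ j := by
      intro i
      have := congrFun hY i
      simpa [Matrix.mulVec, dotProduct, hankel] using this.symm
    calc ∑ i : Fin (n+1), (q i : ℂ) * σ ^ (i : ℕ)
        = ∑ i : Fin (n+1), ∑ j, (q i : ℂ) * ((U ⟨i.1 + j.1, by omega⟩ : ℂ) * ξ j) := by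
          exact Finset.sum_congr rfl fun i _ => by rw [hUi i, Finset.mul_sum]
      _ = ∑ j, ((∑ i : Fin (n+1), q i * U ⟨i.1 + j.1, by omega⟩ : ℝ) : ℂ) * ξ j := by
          rw [Finset.sum_comm]
          refine Finset.sum_congr rfl fun j _ => ?_
          push_cast
          rw [Finset.sum_mul]
          exact Finset.sum_congr rfl fun i _ => by ring
      _ = ∑ j, ((Y ⟨n + j.1, by omega⟩ + ∑ i : Fin n, p i * Y ⟨i.1 + j.1, by omega⟩ : ℝ) : ℂ)
            * ξ j := by
          refine Finset.sum_congr rfl fun j _ => ?_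
          congr 1
          have hj := hqp j
          norm_cast
          linarith
      _ = ∑ j, (Y ⟨n + j.1, by omega⟩ : ℂ) * ξ j
            + ∑ i : Fin n, (p i : ℂ) * ∑ j, (Y ⟨i.1 + j.1, by omega⟩ : ℂ) * ξ j := by
          have hswap : ∑ i : Fin n, (p i : ℂ) * ∑ j, (Y ⟨i.1 + j.1, by omega⟩ : ℂ) * ξ j
              = ∑ j, ∑ i : Fin n, (p i : ℂ) * ((Y ⟨i.1 + j.1, by omega⟩ : ℂ) * ξ j) := by
            simp only [Finset.mul_sum]
            rw [Finset.sum_comm]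
          rw [hswap, ← Finset.sum_add_distrib]
          refine Finset.sum_congr rfl fun j _ => ?_
          push_cast
          rw [add_mul, Finset.sum_mul]
          congr 1
          exact Finset.sum_congr rfl fun i _ => by ring
      _ = M0 * (σ ^ n + ∑ i : Fin n, (p i : ℂ) * σ ^ (i : ℕ)) := by
          have hlast := hYi (Fin.last n)
          simp only [Fin.val_last] at hlast
          rw [← hlast, mul_add]
          congr 1
          rw [Finset.mul_sum]
          refine Finset.sum_congr rfl fun i _ => ?_
          have := hYi i.castSucc
          simp only [Fin.coe_castSucc] at this
          rw [← this]
          ring
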